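/- Let (K̂, f̂) be a central model and let S be a strip over K̂ with S ⊆ K̂ × [0,1] and f̂(cl(S)) ⊆ S, where cl(S) is the closure of S in K̂ × [0,1]. Then the set I := ⋂_{n≥0} f̂ⁿ(cl(S)) satisfies: (i) I is a compact strip over K̂ containing K̂ × {0}, with each fiber I ∩ ({x} × [0,∞)) a compact interval containing (x,0); (ii) f̂(I) = I; and (iii) the fiber map x ↦ I ∩ ({x} × [0,1]), viewed as a map from K̂ to the nonempty compact subsets of K̂ × [0,1], is upper semicontinuous at every point of K̂. -/

import Mathlib

open scoped NNReal

/-- A central model: a compact metric space `K` together with a continuous skew-product map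
`f : K × [0,1] → K × [0,∞)` fixing the zero section `K × {0}` (onto it), and which is a local
homeomorphism in a small neighborhood of `K × {0}`.  The half line `[0,∞)` is modelled by
`ℝ≥0` and `[0,1]` by `Set.Iic (1 : ℝ≥0)`. -/
structure CentralModel (K : Type*) [MetricSpace K] [CompactSpace K] where
  f : K × ℝ≥0 → K × ℝ≥0
  f1 : K → K
  f2 : K × ℝ≥0 → ℝ≥0
  skew : ∀ p : K × ℝ≥0, f p = (f1 p.1, f2 p)
  zero : ∀ x : K, f2 (x, 0) = 0
  surj : ∀ x : K, ∃ y : K, f1 y = x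
  cont : ContinuousOn f (Set.univ ×ˢ Set.Iic 1)
  localHomeo : ∃ ε : ℝ≥0, 0 < ε ∧ ε ≤ 1 ∧ ∀ p : K × ℝ≥0, p.2 < ε →
    ∃ V ∈ nhds p, V ⊆ Set.univ ×ˢ Set.Iic 1 ∧ Set.InjOn f V ∧ IsOpen (f '' V) ∧
      ∃ g : K × ℝ≥0 → K × ℝ≥0, ContinuousOn g (f '' V) ∧ ∀ q ∈ V, g (f q) = q

/-- A strip over `A ⊆ K`: a subset of `A × [0,∞)` whose fiber over every `x ∈ A`
is an interval containing `(x, 0)`. -/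
def IsStrip {K : Type*} [MetricSpace K] [CompactSpace K]
    (A : Set K) (S : Set (K × ℝ≥0)) : Prop :=
  S ⊆ A ×ˢ Set.univ ∧
  ∀ x ∈ A, ((x, (0 : ℝ≥0)) ∈ S ∧ Set.OrdConnected {t : ℝ≥0 | (x, t) ∈ S})

/-- Upper semicontinuity at a point for a set-valued map. -/
def UscAt {B Y : Type*} [TopologicalSpace B] [TopologicalSpace Y]
    (Θ : B → Set Y) (b : B) : Prop :=
  ∀ C : Set Y, IsCompact C → C ∩ Θ b = ∅ →
    ∃ V ∈ nhds b, ∀ z ∈ V, Θ z ∩ C = ∅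

/-- For a trapping strip `S` of a central model, the maximal invariant set
`I = ⋂ₙ f̂ⁿ(cl S)` is a compact invariant strip containing the zero section, with compact
interval fibers, and its fiber map is upper semicontinuous at every point. -/
theorem central_model_maximal_invariant_strip
    {K : Type*} [MetricSpace K] [CompactSpace K] (M : CentralModel K)
    (S : Set (K × ℝ≥0)) (hstrip : IsStrip Set.univ S) (hsub : S ⊆ Set.univ ×ˢ Set.Iic 1)
    (htrap : ∀ p ∈ closure S, M.f p ∈ S)
    (I : Set (K × ℝ≥0)) (hI : I = ⋂ n : ℕ, (M.f)^[n] '' closure S) :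
    (IsCompact I ∧ IsStrip Set.univ I ∧ Set.univ ×ˢ {(0 : ℝ≥0)} ⊆ I ∧
      ∀ x : K, IsCompact {t : ℝ≥0 | (x, t) ∈ I} ∧
        Set.OrdConnected {t : ℝ≥0 | (x, t) ∈ I} ∧ (x, (0 : ℝ≥0)) ∈ I) ∧
    M.f '' I = I ∧
    (∀ x : K, UscAt (fun x : K => I ∩ {x} ×ˢ Set.Iic 1) x) := by
  subst hI
  obtain ⟨hSsub, hSfib⟩ := hstrip
  have hclosed1 : IsClosed (Set.univ ×ˢ Set.Iic (1:ℝ≥0) : Set (K × ℝ≥0)) :=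
    isClosed_univ.prod isClosed_Iic
  have hT1 : closure S ⊆ Set.univ ×ˢ Set.Iic 1 := closure_minimal hsub hclosed1
  have hIic : IsCompact (Set.Iic (1:ℝ≥0)) := by
    have : Set.Iic (1:ℝ≥0) = Set.Icc 0 1 := by
      ext t; simp
    rw [this]; exact isCompact_Icc
  have hcomp1 : IsCompact (Set.univ ×ˢ Set.Iic (1:ℝ≥0) : Set (K × ℝ≥0)) :=
    isCompact_univ.prod hIic
  have hTcomp : IsCompact (closure S) := hcomp1.of_isClosed_subset isClosed_closure hT1
  have hTzero : ∀ x : K, (x, (0:ℝ≥0)) ∈ closure S := fun x =>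
    subset_closure (hSfib x trivial).1
  have hTdown : ∀ (x : K) (t s : ℝ≥0), (x, t) ∈ closure S → s ≤ t → (x, s) ∈ closure S := by
    intro x t s h hst
    rw [mem_closure_iff_seq_limit] at h ⊢
    obtain ⟨u, huS, hulim⟩ := h
    refine ⟨fun n => ((u n).1, min s (u n).2), fun n => ?_, ?_⟩
    · have h0 : (0:ℝ≥0) ∈ {r : ℝ≥0 | ((u n).1, r) ∈ S} := (hSfib (u n).1 trivial).1
      have hm : (u n).2 ∈ {r : ℝ≥0 | ((u n).1, r) ∈ S} := by
        simpa using huS n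
      exact (hSfib (u n).1 trivial).2.out h0 hm ⟨zero_le, min_le_right _ _⟩
    · have h1 : Filter.Tendsto (fun n => (u n).1) Filter.atTop (nhds x) :=
        (continuous_fst.tendsto _).comp hulim
      have h2 : Filter.Tendsto (fun n => (u n).2) Filter.atTop (nhds t) :=
        (continuous_snd.tendsto _).comp hulim
      have h3 : Filter.Tendsto (fun n => min s (u n).2) Filter.atTop (nhds s) := by
        have hc : Filter.Tendsto (fun _ : ℕ => s) Filter.atTop (nhds s) := tendsto_const_nhds
        have := hc.min h2
        rwa [min_eq_left hst] at this
      exact h1.prodMk_nhds h3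
  have hf2eq : ∀ p : K × ℝ≥0, M.f2 p = (M.f p).2 := fun p => by rw [M.skew]
  have hf2cont : ContinuousOn M.f2 (Set.univ ×ˢ Set.Iic 1) :=
    (continuous_snd.comp_continuousOn M.cont).congr fun p _ => hf2eq p
  have key : ∀ C : Set (K × ℝ≥0), IsCompact C → C ⊆ closure S → (∀ x : K, (x,(0:ℝ≥0)) ∈ C) →
      (∀ (x : K) (t s : ℝ≥0), (x,t) ∈ C → s ≤ t → (x,s) ∈ C) →
      IsCompact (M.f '' C) ∧ M.f '' C ⊆ closure S ∧ (∀ x : K, (x,(0:ℝ≥0)) ∈ M.f '' C) ∧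
      (∀ (x : K) (t s : ℝ≥0), (x,t) ∈ M.f '' C → s ≤ t → (x,s) ∈ M.f '' C) := by
    intro C hCc hCT hC0 hCd
    have hCsub : C ⊆ Set.univ ×ˢ Set.Iic 1 := hCT.trans hT1
    refine ⟨hCc.image_of_continuousOn (M.cont.mono hCsub), ?_, ?_, ?_⟩
    · rintro p ⟨q, hq, rfl⟩
      exact subset_closure (htrap q (hCT hq))
    · intro x
      obtain ⟨y, hy⟩ := M.surj x
      refine ⟨(y, 0), hC0 y, ?_⟩
      rw [M.skew]
      simp [M.zero, hy]
    · rintro x t s ⟨⟨y, r⟩, hyr, heq⟩ hst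
      rw [M.skew] at heq
      simp only [Prod.mk.injEq] at heq
      obtain ⟨h1, h2⟩ := heq
      have hr1 : r ≤ 1 := (hCsub hyr).2
      have hgc : ContinuousOn (fun u : ℝ≥0 => M.f2 (y, u)) (Set.Icc 0 r) := by
        apply hf2cont.comp (Continuous.continuousOn (Continuous.prodMk_right y))
        intro u hu
        exact ⟨trivial, hu.2.trans hr1⟩
      have hmem : s ∈ Set.Icc (M.f2 (y, 0)) (M.f2 (y, r)) := by
        rw [M.zero, h2]; exact ⟨zero_le, hst⟩
      obtain ⟨u, hu, hgu⟩ := intermediate_value_Icc (zero_le : (0:ℝ≥0) ≤ r) hgc hmem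
      refine ⟨(y, u), hCd y r u hyr hu.2, ?_⟩
      rw [M.skew]
      simp only [Prod.mk.injEq]
      exact ⟨h1, hgu⟩
  have hC0eq : (M.f)^[0] '' closure S = closure S := by simp
  have hCsucc : ∀ n : ℕ, (M.f)^[n+1] '' closure S = M.f '' ((M.f)^[n] '' closure S) := by
    intro n
    rw [Function.iterate_succ', Set.image_comp]
  have hgood : ∀ n : ℕ, IsCompact ((M.f)^[n] '' closure S) ∧
      (M.f)^[n] '' closure S ⊆ closure S ∧
      (∀ x : K, (x,(0:ℝ≥0)) ∈ (M.f)^[n] '' closure S) ∧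
      (∀ (x : K) (t s : ℝ≥0), (x,t) ∈ (M.f)^[n] '' closure S → s ≤ t →
        (x,s) ∈ (M.f)^[n] '' closure S) := by
    intro n
    induction n with
    | zero => rw [hC0eq]; exact ⟨hTcomp, subset_rfl, hTzero, hTdown⟩
    | succ n ih =>
      rw [hCsucc]
      obtain ⟨a, b, c, d⟩ := key _ ih.1 ih.2.1 ih.2.2.1 ih.2.2.2
      exact ⟨a, b, c, d⟩
  have hanti : ∀ n : ℕ, (M.f)^[n+1] '' closure S ⊆ (M.f)^[n] '' closure S := by
    intro n
    induction n with
    | zero =>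
      rw [hCsucc, hC0eq]
      rintro p ⟨q, hq, rfl⟩
      exact subset_closure (htrap q (hC0eq ▸ hq))
    | succ n ih =>
      rw [hCsucc (n+1)]
      exact (Set.image_mono ih).trans (hCsucc n).symm.subset
  have hIsub : ∀ n : ℕ, (⋂ n : ℕ, (M.f)^[n] '' closure S) ⊆ (M.f)^[n] '' closure S :=
    fun n => Set.iInter_subset _ n
  have hIclosed : IsClosed (⋂ n : ℕ, (M.f)^[n] '' closure S) :=
    isClosed_iInter fun n => ((hgood n).1).isClosed
  have hIcomp : IsCompact (⋂ n : ℕ, (M.f)^[n] '' closure S) :=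
    (hgood 0).1.of_isClosed_subset hIclosed (hIsub 0)
  have hI0 : ∀ x : K, (x,(0:ℝ≥0)) ∈ ⋂ n : ℕ, (M.f)^[n] '' closure S :=
    fun x => Set.mem_iInter.2 fun n => (hgood n).2.2.1 x
  have hIdown : ∀ (x : K) (t s : ℝ≥0), (x,t) ∈ (⋂ n : ℕ, (M.f)^[n] '' closure S) → s ≤ t →
      (x,s) ∈ ⋂ n : ℕ, (M.f)^[n] '' closure S := by
    intro x t s h hst
    exact Set.mem_iInter.2 fun n => (hgood n).2.2.2 x t s (Set.mem_iInter.1 h n) hst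
  have hIsub1 : (⋂ n : ℕ, (M.f)^[n] '' closure S) ⊆ Set.univ ×ˢ Set.Iic 1 :=
    (hIsub 0).trans (by rw [hC0eq]; exact hT1)
  refine ⟨⟨hIcomp, ?_, ?_, ?_⟩, ?_, ?_⟩
  · exact ⟨fun p _ => ⟨trivial, trivial⟩,
      fun x _ => ⟨hI0 x, ⟨fun b hb c hc d hd => hIdown x c d hc hd.2⟩⟩⟩
  · rintro ⟨x, t⟩ ⟨-, ht⟩
    have ht' : t = 0 := ht
    rw [ht']
    exact hI0 x
  · intro x
    refine ⟨?_, ⟨fun b hb c hc d hd => hIdown x c d hc hd.2⟩, hI0 x⟩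
    have hcl : IsClosed {t : ℝ≥0 | (x,t) ∈ ⋂ n : ℕ, (M.f)^[n] '' closure S} :=
      hIclosed.preimage (Continuous.prodMk_right x)
    have hsb : {t : ℝ≥0 | (x,t) ∈ ⋂ n : ℕ, (M.f)^[n] '' closure S} ⊆ Set.Iic 1 :=
      fun t ht => (hIsub1 ht).2
    exact hIic.of_isClosed_subset hcl hsb
  · apply Set.Subset.antisymm
    · rintro p ⟨q, hq, rfl⟩
      refine Set.mem_iInter.2 fun n => ?_
      match n with
      | 0 => exact hanti 0 (by rw [hCsucc 0]; exact ⟨q, hIsub 0 hq, rfl⟩)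
      | (m+1) =>
        rw [hCsucc m]
        exact ⟨q, hIsub m hq, rfl⟩
    · intro p hp
      have hDne : ∀ n : ℕ, ((M.f)^[n] '' closure S ∩ M.f ⁻¹' {p}).Nonempty := by
        intro n
        have hpn : p ∈ (M.f)^[n+1] '' closure S := Set.mem_iInter.1 hp (n+1)
        rw [hCsucc] at hpn
        obtain ⟨q, hq, hfq⟩ := hpn
        exact ⟨q, hq, by simp [hfq]⟩
      have hDcl : ∀ n : ℕ, IsClosed ((M.f)^[n] '' closure S ∩ M.f ⁻¹' {p}) := by
        intro n
        exact ContinuousOn.preimage_isClosed_of_isClosed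
          (M.cont.mono (((hgood n).2.1).trans hT1)) ((hgood n).1.isClosed) isClosed_singleton
      have hDanti : ∀ n : ℕ, (M.f)^[n+1] '' closure S ∩ M.f ⁻¹' {p} ⊆
          (M.f)^[n] '' closure S ∩ M.f ⁻¹' {p} :=
        fun n => Set.inter_subset_inter_left _ (hanti n)
      have hDcomp : IsCompact ((M.f)^[0] '' closure S ∩ M.f ⁻¹' {p}) :=
        (hgood 0).1.of_isClosed_subset (hDcl 0) Set.inter_subset_left
      obtain ⟨q, hq⟩ := IsCompact.nonempty_iInter_of_sequence_nonempty_isCompact_isClosed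
        (fun n => (M.f)^[n] '' closure S ∩ M.f ⁻¹' {p}) hDanti hDne hDcomp hDcl
      refine ⟨q, Set.mem_iInter.2 fun n => (Set.mem_iInter.1 hq n).1, ?_⟩
      exact Set.mem_singleton_iff.1 (Set.mem_iInter.1 hq 0).2
  · intro x C hCcomp hdisj
    have hDcomp : IsCompact (C ∩ ⋂ n : ℕ, (M.f)^[n] '' closure S) :=
      hCcomp.inter_right hIclosed
    have hPcomp : IsCompact (Prod.fst '' (C ∩ ⋂ n : ℕ, (M.f)^[n] '' closure S)) :=
      hDcomp.image continuous_fst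
    have hx : x ∉ Prod.fst '' (C ∩ ⋂ n : ℕ, (M.f)^[n] '' closure S) := by
      rintro ⟨p, ⟨hpC, hpI⟩, rfl⟩
      have hmem : p ∈ C ∩ ((⋂ n : ℕ, (M.f)^[n] '' closure S) ∩ {p.1} ×ˢ Set.Iic 1) :=
        ⟨hpC, hpI, rfl, (hIsub1 hpI).2⟩
      rw [hdisj] at hmem
      exact hmem
    refine ⟨(Prod.fst '' (C ∩ ⋂ n : ℕ, (M.f)^[n] '' closure S))ᶜ,
      (hPcomp.isClosed.isOpen_compl).mem_nhds hx, ?_⟩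
    intro z hz
    rw [Set.eq_empty_iff_forall_notMem]
    rintro p ⟨⟨hpI, hp1, -⟩, hpC⟩
    exact hz ⟨p, ⟨hpC, hpI⟩, hp1⟩
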